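/- Let ω : ℝ → ℝ, let f, g : ℝ → ℝ be continuous, and let F : {u ∈ ℝ : u ≠ 0} → ℝ be differentiable with F'(u) = f(u) − u⁻²·g(1/u) for every u ≠ 0. Let x, y : ℝ → ℝ be twice differentiable with x(t) ≠ 0 and y(t) ≠ 0 for all t, satisfying the generalized Ermakov system x''(t) = −ω(t)²·x(t) + g(y(t)/x(t))/(y(t)·x(t)²) and y''(t) = −ω(t)²·y(t) + f(x(t)/y(t))/(x(t)·y(t)²). Then the generalized Lewis invariant I(t) := (1/2)·(x(t)·y'(t) − y(t)·x'(t))² + F(x(t)/y(t)) is constant on ℝ. -/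

import Mathlib

/-- The generalized Lewis invariant
`I(t) = (1/2)(x y' − y x')² + F(x/y)` of the generalized Ermakov system
`x'' = −ω²(t)x + g(y/x)/(y x²)`, `y'' = −ω²(t)y + f(x/y)/(x y²)`
is a constant of the motion. -/
theorem generalized_ermakov_lewis_invariant
    (ω f g : ℝ → ℝ) (F : ℝ → ℝ) (x y : ℝ → ℝ)
    (hf : Continuous f) (hg : Continuous g)
    (hF : ∀ u : ℝ, u ≠ 0 → HasDerivAt F (f u - (u⁻¹) ^ 2 * g (1 / u)) u)
    (hx : Differentiable ℝ x) (hx' : Differentiable ℝ (deriv x))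
    (hy : Differentiable ℝ y) (hy' : Differentiable ℝ (deriv y))
    (hx0 : ∀ t, x t ≠ 0) (hy0 : ∀ t, y t ≠ 0)
    (hxeq : ∀ t, deriv (deriv x) t =
      -(ω t) ^ 2 * x t + g (y t / x t) / (y t * (x t) ^ 2))
    (hyeq : ∀ t, deriv (deriv y) t =
      -(ω t) ^ 2 * y t + f (x t / y t) / (x t * (y t) ^ 2)) :
    ∃ c : ℝ, ∀ t : ℝ,
      (1 / 2) * (x t * deriv y t - y t * deriv x t) ^ 2 + F (x t / y t) = c := by
  have key : ∀ t : ℝ, HasDerivAt (fun t =>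
      (1 / 2) * (x t * deriv y t - y t * deriv x t) ^ 2 + F (x t / y t)) 0 t := by
    intro t
    have hxt := (hx t).hasDerivAt
    have hyt := (hy t).hasDerivAt
    have hx't := (hx' t).hasDerivAt
    have hy't := (hy' t).hasDerivAt
    have hu : x t / y t ≠ 0 := div_ne_zero (hx0 t) (hy0 t)
    have hq : HasDerivAt (fun t => x t / y t)
        ((deriv x t * y t - x t * deriv y t) / (y t) ^ 2) t := hxt.div hyt (hy0 t)
    have hW : HasDerivAt (fun t => x t * deriv y t - y t * deriv x t)
        (deriv x t * deriv y t + x t * deriv (deriv y) t -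
          (deriv y t * deriv x t + y t * deriv (deriv x) t)) t :=
      (hxt.mul hy't).sub (hyt.mul hx't)
    have h1 : HasDerivAt (fun t => (1 / 2) * (x t * deriv y t - y t * deriv x t) ^ 2)
        ((1 / 2) * ((2 : ℕ) * (x t * deriv y t - y t * deriv x t) ^ 1 *
          (deriv x t * deriv y t + x t * deriv (deriv y) t -
            (deriv y t * deriv x t + y t * deriv (deriv x) t)))) t :=
      (hW.pow 2).const_mul (1 / 2 : ℝ)
    have h2 : HasDerivAt (fun t => F (x t / y t))
        ((f (x t / y t) - ((x t / y t)⁻¹) ^ 2 * g (1 / (x t / y t))) *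
          ((deriv x t * y t - x t * deriv y t) / (y t) ^ 2)) t :=
      (hF _ hu).comp t hq
    have h3 := h1.add h2
    refine h3.congr_deriv ?_
    rw [hxeq t, hyeq t, one_div_div, inv_div]
    have hxt0 := hx0 t
    have hyt0 := hy0 t
    field_simp
    ring
  refine ⟨(1 / 2) * (x 0 * deriv y 0 - y 0 * deriv x 0) ^ 2 + F (x 0 / y 0), fun t => ?_⟩
  exact is_const_of_deriv_eq_zero (fun s => (key s).differentiableAt)
    (fun s => (key s).deriv) t 0
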